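/- For every integer n > 2 there exists a graph G on n vertices and an edge e ∉ E(G) such that the symmetric difference of the sets of maximal cliques of G and G+e has size exactly 3·f(n-2): namely, let G consist of a Moon–Moser graph G' on n-2 vertices plus two vertices a, b each adjacent to all of V(G'), with a and b mutually non-adjacent, and e = (a,b). Then G has 2·f(n-2) maximal cliques, G+e has f(n-2) maximal cliques, and the two clique sets are disjoint. -/

import Mathlib

open SimpleGraph

/-- `s` is a maximal clique of the simple graph `G`. -/
def MaxClique {V : Type*} (G : SimpleGraph V) (s : Set V) : Prop :=
  G.IsClique s ∧ ∀ t : Set V, G.IsClique t → s ⊆ t → s = t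

/-- The graph obtained from `G` by adding the edge `(u,v)`. -/
def addEdge {V : Type*} (G : SimpleGraph V) (u v : V) : SimpleGraph V :=
  G ⊔ SimpleGraph.fromEdgeSet {s(u, v)}

/-- The graph obtained from `G` by adding the set of edges `H`. -/
def addEdges {V : Type*} (G : SimpleGraph V) (H : Set (Sym2 V)) : SimpleGraph V :=
  G ⊔ SimpleGraph.fromEdgeSet H

/-- The number of maximal cliques of `G`. -/
noncomputable def numMaxCliques {V : Type*} (G : SimpleGraph V) : ℕ :=
  Nat.card {s : Set V // MaxClique G s}

/-- `f k`: the maximum possible number of maximal cliques in a graph on `k` vertices. -/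
noncomputable def maxNumMaxCliques (k : ℕ) : ℕ :=
  sSup {m | ∃ G : SimpleGraph (Fin k), m = numMaxCliques G}

namespace Stmt5

variable {m : ℕ}

def emb : Fin (m+1) → Fin (m+3) := Fin.castLE (by omega)

def vA : Fin (m+3) := ⟨m+1, by omega⟩
def vB : Fin (m+3) := ⟨m+2, by omega⟩

lemma emb_lt (i : Fin (m+1)) : (emb i).1 < m+1 := i.2

lemma emb_inj : Function.Injective (emb (m := m)) := by
  intro i j h
  have h2 : (emb i).1 = (emb j).1 := congrArg Fin.val h
  exact Fin.ext h2

lemma vA_ne_vB : (vA : Fin (m+3)) ≠ vB := by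
  simp [vA, vB, Fin.ext_iff]

lemma vA_not_mem_image (C : Set (Fin (m+1))) : vA ∉ emb '' C := by
  rintro ⟨i, -, h⟩
  have h2 := emb_lt i
  rw [h] at h2
  simp [vA] at h2

lemma vB_not_mem_image (C : Set (Fin (m+1))) : vB ∉ emb '' C := by
  rintro ⟨i, -, h⟩
  have h2 := emb_lt i
  rw [h] at h2
  simp [vB] at h2

lemma vcases (x : Fin (m+3)) : (∃ i, x = emb i) ∨ x = vA ∨ x = vB := by
  rcases lt_or_ge x.1 (m+1) with h | h
  · exact Or.inl ⟨⟨x.1, h⟩, Fin.ext rfl⟩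
  · have hx := x.2
    have : x.1 = m+1 ∨ x.1 = m+2 := by omega
    rcases this with h | h
    · exact Or.inr (Or.inl (Fin.ext h))
    · exact Or.inr (Or.inr (Fin.ext h))

def bigG (G' : SimpleGraph (Fin (m+1))) : SimpleGraph (Fin (m+3)) where
  Adj x y := x ≠ y ∧ (∀ (hx : x.1 < m+1) (hy : y.1 < m+1), G'.Adj ⟨x.1, hx⟩ ⟨y.1, hy⟩) ∧
      (x.1 < m+1 ∨ y.1 < m+1)
  symm := by
    constructor
    rintro x y ⟨h1, h2, h3⟩
    exact ⟨h1.symm, fun hy hx => (h2 hx hy).symm, h3.symm⟩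
  loopless := ⟨fun x h => h.1 rfl⟩

variable {G' : SimpleGraph (Fin (m+1))}

lemma adj_emb_emb {i j : Fin (m+1)} : (bigG G').Adj (emb i) (emb j) ↔ G'.Adj i j := by
  constructor
  · rintro ⟨h1, h2, h3⟩
    exact h2 (emb_lt i) (emb_lt j)
  · intro h
    exact ⟨fun hc => (G'.ne_of_adj h) (emb_inj hc), fun _ _ => h, Or.inl (emb_lt i)⟩

lemma adj_emb_vA (i : Fin (m+1)) : (bigG G').Adj (emb i) vA := by
  refine ⟨?_, ?_, Or.inl (emb_lt i)⟩
  · intro h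
    have := congrArg Fin.val h
    have h2 := emb_lt i
    simp [vA] at this
    omega
  · intro hx hy
    exact absurd hy (by simp [vA])

lemma adj_emb_vB (i : Fin (m+1)) : (bigG G').Adj (emb i) vB := by
  refine ⟨?_, ?_, Or.inl (emb_lt i)⟩
  · intro h
    have := congrArg Fin.val h
    have h2 := emb_lt i
    simp [vB] at this
    omega
  · intro hx hy
    exact absurd hy (by simp [vB])

lemma not_adj_vA_vB : ¬ (bigG G').Adj vA vB := by
  rintro ⟨-, -, h3⟩
  simp [vA, vB] at h3

lemma isClique_image_union {t : Set (Fin (m+1))} (ht : G'.IsClique t) {v : Fin (m+3)}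
    (hadj : ∀ i, (bigG G').Adj (emb i) v) :
    (bigG G').IsClique (emb '' t ∪ {v}) := by
  rintro x (⟨i, hi, rfl⟩ | hx) y (⟨j, hj, rfl⟩ | hy) hne
  · exact adj_emb_emb.2 (ht hi hj (fun h => hne (congrArg emb h)))
  · rw [Set.mem_singleton_iff] at hy; subst hy; exact hadj i
  · rw [Set.mem_singleton_iff] at hx; subst hx; exact ((hadj j).symm)
  · rw [Set.mem_singleton_iff] at hx hy; exact absurd (hx.trans hy.symm) hne

lemma extract {s : Set (Fin (m+3))} (hcl : (bigG G').IsClique s)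
    (hmax : ∀ t : Set (Fin (m+3)), (bigG G').IsClique t → s ⊆ t → s = t)
    {v w : Fin (m+3)}
    (hadj : ∀ i, (bigG G').Adj (emb i) v)
    (hnadj : ¬ (bigG G').Adj v w)
    (hvw : v ≠ w)
    (hv_not : ∀ C, v ∉ emb '' C)
    (hcases : ∀ x : Fin (m+3), (∃ i, x = emb i) ∨ x = v ∨ x = w)
    (hvs : v ∈ s) :
    ∃ C, MaxClique G' C ∧ s = emb '' C ∪ {v} := by
  have hw : w ∉ s := fun hws => hnadj (hcl hvs hws hvw)
  set C := {i | emb i ∈ s} with hCdef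
  have hsC : s = emb '' C ∪ {v} := by
    ext x
    constructor
    · intro hx
      rcases hcases x with ⟨i, rfl⟩ | rfl | rfl
      · exact Or.inl ⟨i, hx, rfl⟩
      · exact Or.inr rfl
      · exact absurd hx hw
    · rintro (⟨i, hi, rfl⟩ | hx)
      · exact hi
      · rw [Set.mem_singleton_iff] at hx; subst hx; exact hvs
  have hCcl : G'.IsClique C := fun i hi j hj hne =>
    adj_emb_emb.1 (hcl hi hj (fun h => hne (emb_inj h)))
  refine ⟨C, ⟨hCcl, ?_⟩, hsC⟩
  intro t ht hCt
  have hsub : s ⊆ emb '' t ∪ {v} := by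
    rw [hsC]
    exact Set.union_subset_union_left _ (Set.image_mono hCt)
  have heq := hmax _ (isClique_image_union ht hadj) hsub
  ext i
  constructor
  · exact fun h => hCt h
  · intro hit
    have : emb i ∈ s := by
      rw [heq]
      exact Or.inl ⟨i, hit, rfl⟩
    exact this

lemma maxClique_of {C : Set (Fin (m+1))} (hC : MaxClique G' C)
    {v w : Fin (m+3)}
    (hadj : ∀ i, (bigG G').Adj (emb i) v)
    (hnadj : ¬ (bigG G').Adj v w)
    (hvw : v ≠ w)
    (hcases : ∀ x : Fin (m+3), (∃ i, x = emb i) ∨ x = v ∨ x = w) :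
    MaxClique (bigG G') (emb '' C ∪ {v}) := by
  refine ⟨isClique_image_union hC.1 hadj, ?_⟩
  intro t ht hst
  have hvt : v ∈ t := hst (Or.inr rfl)
  have hwt : w ∉ t := fun hwt => hnadj (ht hvt hwt hvw)
  set D := {i | emb i ∈ t} with hDdef
  have hDcl : G'.IsClique D := fun i hi j hj hne =>
    adj_emb_emb.1 (ht hi hj (fun h => hne (emb_inj h)))
  have hCD : C ⊆ D := fun i hi => hst (Or.inl ⟨i, hi, rfl⟩)
  have hCDeq : C = D := hC.2 D hDcl hCD
  apply Set.Subset.antisymm hst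
  intro x hx
  rcases hcases x with ⟨i, rfl⟩ | rfl | rfl
  · exact Or.inl ⟨i, by rw [hCDeq]; exact hx, rfl⟩
  · exact Or.inr rfl
  · exact absurd hx hwt

lemma vcases' (x : Fin (m+3)) : (∃ i, x = emb i) ∨ x = vB ∨ x = vA := by
  rcases vcases x with h | h | h
  · exact Or.inl h
  · exact Or.inr (Or.inr h)
  · exact Or.inr (Or.inl h)

lemma maxClique_bigG_iff {s : Set (Fin (m+3))} :
    MaxClique (bigG G') s ↔
      ∃ C, MaxClique G' C ∧ (s = emb '' C ∪ {vA} ∨ s = emb '' C ∪ {vB}) := by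
  constructor
  · rintro ⟨hcl, hmax⟩
    by_cases ha : vA ∈ s
    · obtain ⟨C, hC, hs⟩ := extract hcl hmax adj_emb_vA not_adj_vA_vB vA_ne_vB
        vA_not_mem_image vcases ha
      exact ⟨C, hC, Or.inl hs⟩
    by_cases hb : vB ∈ s
    · obtain ⟨C, hC, hs⟩ := extract hcl hmax adj_emb_vB
        (fun h => not_adj_vA_vB h.symm) vA_ne_vB.symm vB_not_mem_image vcases' hb
      exact ⟨C, hC, Or.inr hs⟩
    · -- s can be extended by vA, contradiction
      exfalso
      have hsub : s ⊆ s ∪ {vA} := Set.subset_union_left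
      have hclique : (bigG G').IsClique (s ∪ {vA}) := by
        rintro x (hx | hx) y (hy | hy) hne
        · exact hcl hx hy hne
        · rw [Set.mem_singleton_iff] at hy; subst hy
          rcases vcases x with ⟨i, rfl⟩ | rfl | rfl
          · exact adj_emb_vA i
          · exact absurd hx ha
          · exact absurd hx hb
        · rw [Set.mem_singleton_iff] at hx; subst hx
          rcases vcases y with ⟨i, rfl⟩ | rfl | rfl
          · exact (adj_emb_vA i).symm
          · exact absurd hy ha
          · exact absurd hy hb
        · rw [Set.mem_singleton_iff] at hx hy; exact absurd (hx.trans hy.symm) hne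
      have := hmax _ hclique hsub
      apply ha
      rw [this]
      exact Or.inr rfl
  · rintro ⟨C, hC, hs | hs⟩ <;> subst hs
    · exact maxClique_of hC adj_emb_vA not_adj_vA_vB vA_ne_vB vcases
    · exact maxClique_of hC adj_emb_vB (fun h => not_adj_vA_vB h.symm) vA_ne_vB.symm vcases'

-- Now the addEdge graph
lemma adj_addEdge_iff {x y : Fin (m+3)} :
    (addEdge (bigG G') vA vB).Adj x y ↔
      (bigG G').Adj x y ∨ (x = vA ∧ y = vB) ∨ (x = vB ∧ y = vA) := by
  simp only [addEdge, sup_adj, fromEdgeSet_adj, Set.mem_singleton_iff, Sym2.eq_iff]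
  constructor
  · rintro (h | ⟨(⟨rfl, rfl⟩ | ⟨rfl, rfl⟩), -⟩)
    · exact Or.inl h
    · exact Or.inr (Or.inl ⟨rfl, rfl⟩)
    · exact Or.inr (Or.inr ⟨rfl, rfl⟩)
  · rintro (h | ⟨rfl, rfl⟩ | ⟨rfl, rfl⟩)
    · exact Or.inl h
    · exact Or.inr ⟨Or.inl ⟨rfl, rfl⟩, vA_ne_vB⟩
    · exact Or.inr ⟨Or.inr ⟨rfl, rfl⟩, vA_ne_vB.symm⟩

lemma isClique_image_union_pair {t : Set (Fin (m+1))} (ht : G'.IsClique t) :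
    (addEdge (bigG G') vA vB).IsClique (emb '' t ∪ {vA, vB}) := by
  rintro x (⟨i, hi, rfl⟩ | hx) y (⟨j, hj, rfl⟩ | hy) hne
  · exact adj_addEdge_iff.2 (Or.inl (adj_emb_emb.2 (ht hi hj (fun h => hne (congrArg emb h)))))
  · rcases hy with rfl | hy
    · exact adj_addEdge_iff.2 (Or.inl (adj_emb_vA i))
    · rw [Set.mem_singleton_iff] at hy; subst hy
      exact adj_addEdge_iff.2 (Or.inl (adj_emb_vB i))
  · rcases hx with rfl | hx
    · exact (adj_addEdge_iff.2 (Or.inl (adj_emb_vA j))).symm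
    · rw [Set.mem_singleton_iff] at hx; subst hx
      exact (adj_addEdge_iff.2 (Or.inl (adj_emb_vB j))).symm
  · rcases hx with rfl | hx <;> rcases hy with rfl | hy
    · exact absurd rfl hne
    · rw [Set.mem_singleton_iff] at hy; subst hy
      exact adj_addEdge_iff.2 (Or.inr (Or.inl ⟨rfl, rfl⟩))
    · rw [Set.mem_singleton_iff] at hx; subst hx
      exact adj_addEdge_iff.2 (Or.inr (Or.inr ⟨rfl, rfl⟩))
    · rw [Set.mem_singleton_iff] at hx hy; exact absurd (hx.trans hy.symm) hne

lemma maxClique_addEdge_iff {s : Set (Fin (m+3))} :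
    MaxClique (addEdge (bigG G') vA vB) s ↔
      ∃ C, MaxClique G' C ∧ s = emb '' C ∪ {vA, vB} := by
  set G2 := addEdge (bigG G') vA vB with hG2
  constructor
  · rintro ⟨hcl, hmax⟩
    -- vA ∈ s
    have key : ∀ v : Fin (m+3), (v = vA ∨ v = vB) → v ∈ s := by
      intro v hv
      by_contra hvs
      have hclique : G2.IsClique (s ∪ {v}) := by
        rintro x (hx | hx) y (hy | hy) hne
        · exact hcl hx hy hne
        · rw [Set.mem_singleton_iff] at hy; subst hy
          rcases vcases x with ⟨i, rfl⟩ | rfl | rfl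
          · rcases hv with rfl | rfl
            · exact adj_addEdge_iff.2 (Or.inl (adj_emb_vA i))
            · exact adj_addEdge_iff.2 (Or.inl (adj_emb_vB i))
          · rcases hv with rfl | rfl
            · exact absurd hx hvs
            · exact adj_addEdge_iff.2 (Or.inr (Or.inl ⟨rfl, rfl⟩))
          · rcases hv with rfl | rfl
            · exact adj_addEdge_iff.2 (Or.inr (Or.inr ⟨rfl, rfl⟩))
            · exact absurd hx hvs
        · rw [Set.mem_singleton_iff] at hx; subst hx
          rcases vcases y with ⟨i, rfl⟩ | rfl | rfl
          · rcases hv with rfl | rfl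
            · exact (adj_addEdge_iff.2 (Or.inl (adj_emb_vA i))).symm
            · exact (adj_addEdge_iff.2 (Or.inl (adj_emb_vB i))).symm
          · rcases hv with rfl | rfl
            · exact absurd hy hvs
            · exact (adj_addEdge_iff.2 (Or.inr (Or.inl ⟨rfl, rfl⟩))).symm
          · rcases hv with rfl | rfl
            · exact (adj_addEdge_iff.2 (Or.inr (Or.inr ⟨rfl, rfl⟩))).symm
            · exact absurd hy hvs
        · rw [Set.mem_singleton_iff] at hx hy; exact absurd (hx.trans hy.symm) hne
      have := hmax _ hclique Set.subset_union_left
      apply hvs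
      rw [this]
      exact Or.inr rfl
    have ha : vA ∈ s := key vA (Or.inl rfl)
    have hb : vB ∈ s := key vB (Or.inr rfl)
    set C := {i | emb i ∈ s} with hCdef
    have hsC : s = emb '' C ∪ {vA, vB} := by
      ext x
      constructor
      · intro hx
        rcases vcases x with ⟨i, rfl⟩ | rfl | rfl
        · exact Or.inl ⟨i, hx, rfl⟩
        · exact Or.inr (Or.inl rfl)
        · exact Or.inr (Or.inr rfl)
      · rintro (⟨i, hi, rfl⟩ | hx)
        · exact hi
        · rcases hx with rfl | hx
          · exact ha
          · rw [Set.mem_singleton_iff] at hx; subst hx; exact hb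
    have hCcl : G'.IsClique C := by
      intro i hi j hj hne
      have := hcl hi hj (fun h => hne (emb_inj h))
      rcases adj_addEdge_iff.1 this with h | ⟨h1, -⟩ | ⟨h1, -⟩
      · exact adj_emb_emb.1 h
      · exact absurd h1 (fun h => vA_not_mem_image {i} ⟨i, rfl, h⟩)
      · exact absurd h1 (fun h => vB_not_mem_image {i} ⟨i, rfl, h⟩)
    refine ⟨C, ⟨hCcl, ?_⟩, hsC⟩
    intro t ht hCt
    have hsub : s ⊆ emb '' t ∪ {vA, vB} := by
      rw [hsC]
      exact Set.union_subset_union_left _ (Set.image_mono hCt)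
    have heq := hmax _ (isClique_image_union_pair ht) hsub
    ext i
    constructor
    · exact fun h => hCt h
    · intro hit
      show emb i ∈ s
      rw [heq]
      exact Or.inl ⟨i, hit, rfl⟩
  · rintro ⟨C, hC, rfl⟩
    refine ⟨isClique_image_union_pair hC.1, ?_⟩
    intro t ht hst
    set D := {i | emb i ∈ t} with hDdef
    have hDcl : G'.IsClique D := by
      intro i hi j hj hne
      have := ht hi hj (fun h => hne (emb_inj h))
      rcases adj_addEdge_iff.1 this with h | ⟨h1, -⟩ | ⟨h1, -⟩
      · exact adj_emb_emb.1 h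
      · exact absurd h1 (fun h => vA_not_mem_image {i} ⟨i, rfl, h⟩)
      · exact absurd h1 (fun h => vB_not_mem_image {i} ⟨i, rfl, h⟩)
    have hCD : C ⊆ D := fun i hi => hst (Or.inl ⟨i, hi, rfl⟩)
    have hCDeq : C = D := hC.2 D hDcl hCD
    apply Set.Subset.antisymm hst
    intro x hx
    rcases vcases x with ⟨i, rfl⟩ | rfl | rfl
    · exact Or.inl ⟨i, by rw [hCDeq]; exact hx, rfl⟩
    · exact Or.inr (Or.inl rfl)
    · exact Or.inr (Or.inr rfl)

-- extraction helpers
lemma image_eq_of_union_singleton {C C' : Set (Fin (m+1))} {v : Fin (m+3)}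
    (hv : ∀ D, v ∉ emb '' D) (h : emb '' C ∪ {v} = emb '' C' ∪ {v}) : C = C' := by
  ext i
  constructor
  · intro hi
    have : emb i ∈ emb '' C' ∪ {v} := by rw [← h]; exact Or.inl ⟨i, hi, rfl⟩
    rcases this with ⟨j, hj, hji⟩ | he
    · rwa [← emb_inj hji]
    · rw [Set.mem_singleton_iff] at he
      exact absurd (⟨i, rfl, he⟩ : v ∈ emb '' {i}) (hv _)
  · intro hi
    have : emb i ∈ emb '' C ∪ {v} := by rw [h]; exact Or.inl ⟨i, hi, rfl⟩
    rcases this with ⟨j, hj, hji⟩ | he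
    · rwa [← emb_inj hji]
    · rw [Set.mem_singleton_iff] at he
      exact absurd (⟨i, rfl, he⟩ : v ∈ emb '' {i}) (hv _)

lemma image_eq_of_union_pair {C C' : Set (Fin (m+1))}
    (h : emb '' C ∪ {vA, vB} = emb '' C' ∪ {vA, vB}) : C = C' := by
  have haux : ∀ i : Fin (m+1), emb i ∉ ({vA, vB} : Set (Fin (m+3))) := by
    rintro i (he | he)
    · exact vA_not_mem_image {i} ⟨i, rfl, he⟩
    · rw [Set.mem_singleton_iff] at he
      exact vB_not_mem_image {i} ⟨i, rfl, he⟩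
  ext i
  constructor
  · intro hi
    have : emb i ∈ emb '' C' ∪ {vA, vB} := by rw [← h]; exact Or.inl ⟨i, hi, rfl⟩
    rcases this with ⟨j, hj, hji⟩ | he
    · rwa [← emb_inj hji]
    · exact absurd he (haux i)
  · intro hi
    have : emb i ∈ emb '' C ∪ {vA, vB} := by rw [h]; exact Or.inl ⟨i, hi, rfl⟩
    rcases this with ⟨j, hj, hji⟩ | he
    · rwa [← emb_inj hji]
    · exact absurd he (haux i)

lemma card_bigG : numMaxCliques (bigG G') = 2 * numMaxCliques G' := by
  classical
  have hbij : Function.Bijective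
      (fun p : {C : Set (Fin (m+1)) // MaxClique G' C} × Bool =>
        (⟨emb '' p.1.1 ∪ {if p.2 then vA else vB}, by
          rcases p with ⟨⟨C, hC⟩, b⟩
          cases b
          · simp only [Bool.false_eq_true, if_false]
            exact maxClique_bigG_iff.2 ⟨C, hC, Or.inr rfl⟩
          · simp only [if_true]
            exact maxClique_bigG_iff.2 ⟨C, hC, Or.inl rfl⟩⟩ :
          {s : Set (Fin (m+3)) // MaxClique (bigG G') s})) := by
    constructor
    · rintro ⟨⟨C, hC⟩, b⟩ ⟨⟨C', hC'⟩, b'⟩ h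
      have h2 : emb '' C ∪ {if b then vA else vB} = emb '' C' ∪ {if b' then vA else vB} :=
        congrArg Subtype.val h
      have hbb : b = b' := by
        by_contra hbb
        have hvv : (if b then vA else vB : Fin (m+3)) ≠ (if b' then vA else vB) := by
          cases b <;> cases b' <;> simp_all [vA_ne_vB, vA_ne_vB.symm]
        have : (if b then (vA : Fin (m+3)) else vB) ∈ emb '' C' ∪ {if b' then vA else vB} := by
          rw [← h2]; exact Or.inr rfl
        rcases this with ⟨j, hj, hji⟩ | he
        · cases b
          · exact vB_not_mem_image C' ⟨j, hj, by simpa using hji⟩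
          · exact vA_not_mem_image C' ⟨j, hj, by simpa using hji⟩
        · exact hvv he
      subst hbb
      have hC_eq : C = C' := by
        cases b
        · exact image_eq_of_union_singleton vB_not_mem_image (by simpa using h2)
        · exact image_eq_of_union_singleton vA_not_mem_image (by simpa using h2)
      simp [hC_eq]
    · rintro ⟨s, hs⟩
      rcases maxClique_bigG_iff.1 hs with ⟨C, hC, hcase | hcase⟩
      · exact ⟨⟨⟨C, hC⟩, true⟩, by simp [hcase]⟩
      · exact ⟨⟨⟨C, hC⟩, false⟩, by simp [hcase]⟩
  have := Nat.card_eq_of_bijective _ hbij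
  rw [numMaxCliques, numMaxCliques, ← this, Nat.card_prod, Nat.card_eq_fintype_card (α := Bool)]
  simp [mul_comm]

lemma card_addEdge : numMaxCliques (addEdge (bigG G') vA vB) = numMaxCliques G' := by
  classical
  have hbij : Function.Bijective
      (fun p : {C : Set (Fin (m+1)) // MaxClique G' C} =>
        (⟨emb '' p.1 ∪ {vA, vB}, maxClique_addEdge_iff.2 ⟨p.1, p.2, rfl⟩⟩ :
          {s : Set (Fin (m+3)) // MaxClique (addEdge (bigG G') vA vB) s})) := by
    constructor
    · rintro ⟨C, hC⟩ ⟨C', hC'⟩ h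
      have h2 : emb '' C ∪ {vA, vB} = emb '' C' ∪ {vA, vB} := congrArg Subtype.val h
      simp [image_eq_of_union_pair h2]
    · rintro ⟨s, hs⟩
      rcases maxClique_addEdge_iff.1 hs with ⟨C, hC, rfl⟩
      exact ⟨⟨C, hC⟩, rfl⟩
  have := Nat.card_eq_of_bijective _ hbij
  rw [numMaxCliques, numMaxCliques, this]

lemma disjoint_cliques :
    Disjoint {s : Set (Fin (m+3)) | MaxClique (bigG G') s}
      {s : Set (Fin (m+3)) | MaxClique (addEdge (bigG G') vA vB) s} := by
  rw [Set.disjoint_left]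
  rintro s hs1 hs2
  rcases maxClique_bigG_iff.1 hs1 with ⟨C, hC, hcase | hcase⟩ <;>
    rcases maxClique_addEdge_iff.1 hs2 with ⟨C', hC', hcase'⟩
  · have : vB ∈ s := by rw [hcase']; exact Or.inr (Or.inr rfl)
    rw [hcase] at this
    rcases this with h | h
    · exact vB_not_mem_image C h
    · rw [Set.mem_singleton_iff] at h
      exact vA_ne_vB h.symm
  · have : vA ∈ s := by rw [hcase']; exact Or.inr (Or.inl rfl)
    rw [hcase] at this
    rcases this with h | h
    · exact vA_not_mem_image C h
    · rw [Set.mem_singleton_iff] at h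
      exact vA_ne_vB h

end Stmt5

lemma exists_max_graph (k : ℕ) :
    ∃ G : SimpleGraph (Fin k), maxNumMaxCliques k = numMaxCliques G := by
  have hne : {m | ∃ G : SimpleGraph (Fin k), m = numMaxCliques G}.Nonempty :=
    ⟨numMaxCliques (⊥ : SimpleGraph (Fin k)), ⊥, rfl⟩
  have hbdd : BddAbove {m | ∃ G : SimpleGraph (Fin k), m = numMaxCliques G} := by
    refine ⟨Nat.card (Set (Fin k)), ?_⟩
    rintro x ⟨G, rfl⟩
    exact Nat.card_le_card_of_injective (Subtype.val :
      {s : Set (Fin k) // MaxClique G s} → Set (Fin k)) Subtype.val_injective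
  exact Nat.sSup_mem hne hbdd

theorem stmt_5 (n : ℕ) (hn : 2 < n) :
    ∃ (G : SimpleGraph (Fin n)) (u v : Fin n), u ≠ v ∧ ¬ G.Adj u v ∧
      numMaxCliques G = 2 * maxNumMaxCliques (n - 2) ∧
      numMaxCliques (addEdge G u v) = maxNumMaxCliques (n - 2) ∧
      Disjoint {s : Set (Fin n) | MaxClique G s} {s : Set (Fin n) | MaxClique (addEdge G u v) s} ∧
      Nat.card ↥(symmDiff {s : Set (Fin n) | MaxClique G s}
          {s : Set (Fin n) | MaxClique (addEdge G u v) s}) = 3 * maxNumMaxCliques (n - 2) := by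
  obtain ⟨m, rfl⟩ : ∃ m, n = m + 3 := ⟨n - 3, by omega⟩
  have hsub : m + 3 - 2 = m + 1 := by omega
  rw [hsub]
  obtain ⟨G', hG'⟩ := exists_max_graph (m + 1)
  refine ⟨Stmt5.bigG G', Stmt5.vA, Stmt5.vB, Stmt5.vA_ne_vB, Stmt5.not_adj_vA_vB, ?_, ?_, ?_, ?_⟩
  · rw [Stmt5.card_bigG, hG']
  · rw [Stmt5.card_addEdge, hG']
  · exact Stmt5.disjoint_cliques
  · have hdisj := Stmt5.disjoint_cliques (G' := G')
    rw [hdisj.symmDiff_eq_sup]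
    have hsup : {s : Set (Fin (m+3)) | MaxClique (Stmt5.bigG G') s} ⊔
        {s : Set (Fin (m+3)) | MaxClique (addEdge (Stmt5.bigG G') Stmt5.vA Stmt5.vB) s} =
        {s : Set (Fin (m+3)) | MaxClique (Stmt5.bigG G') s} ∪
        {s : Set (Fin (m+3)) | MaxClique (addEdge (Stmt5.bigG G') Stmt5.vA Stmt5.vB) s} := rfl
    rw [hsup, Nat.card_coe_set_eq,
      Set.ncard_union_eq hdisj (Set.toFinite _) (Set.toFinite _),
      ← Nat.card_coe_set_eq, ← Nat.card_coe_set_eq]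
    have h1 : Nat.card {s : Set (Fin (m+3)) | MaxClique (Stmt5.bigG G') s} =
        numMaxCliques (Stmt5.bigG G') := rfl
    have h2 : Nat.card {s : Set (Fin (m+3)) | MaxClique (addEdge (Stmt5.bigG G') Stmt5.vA Stmt5.vB) s} =
        numMaxCliques (addEdge (Stmt5.bigG G') Stmt5.vA Stmt5.vB) := rfl
    rw [h1, h2, Stmt5.card_bigG, Stmt5.card_addEdge, hG']
    ring
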